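/- Let P_{t,m}(x) = (x+t+1)(x+t+2)⋯(x+t+m) be the shifted rising factorial. Then the polynomial Q_{t,m}(x) = P_{t,m}(x)² − P_{t,m}(−x)² is divisible by x, and Q_{t,m}(x)/x is an even polynomial of degree 2(m−1) whose constant coefficient equals 4·[(t+m)!/t!]²·(H_{t+m} − H_t), where H_j denotes the j-th harmonic number. -/

import Mathlib

open Polynomial

/-- The `k`-th harmonic number `H_k = 1 + 1/2 + ⋯ + 1/k` (with `H_0 = 0`), as a real number. -/
noncomputable def Hnum (k : ℕ) : ℝ := ∑ i ∈ Finset.range k, (1 : ℝ) / (i + 1)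

/-- The shifted rising factorial `P_{t,m}(x) = (x+t+1)(x+t+2)⋯(x+t+m)`. -/
noncomputable def Ppoly (t m : ℕ) : Polynomial ℝ :=
  ∏ j ∈ Finset.range m, (X + C ((t : ℝ) + j + 1))

/-- `Q_{t,m}(x) = P_{t,m}(x)² − P_{t,m}(−x)²`. -/
noncomputable def Qpoly (t m : ℕ) : Polynomial ℝ :=
  (Ppoly t m) ^ 2 - ((Ppoly t m).comp (-X)) ^ 2

namespace Stmt7Aux

open Finset

lemma monic_aux (g : ℕ → ℝ) (m : ℕ) : (∏ j ∈ range m, (X + C (g j))).Monic :=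
  monic_prod_of_monic _ _ fun j _ => monic_X_add_C _

lemma natDegree_aux (g : ℕ → ℝ) (m : ℕ) :
    (∏ j ∈ range m, (X + C (g j))).natDegree = m := by
  rw [natDegree_prod_of_monic _ _ fun j _ => monic_X_add_C _]
  simp

lemma nextCoeff_aux (g : ℕ → ℝ) (m : ℕ) :
    (∏ j ∈ range m, (X + C (g j))).nextCoeff = ∑ j ∈ range m, g j := by
  rw [Monic.nextCoeff_prod _ _ fun j _ => monic_X_add_C _]
  simp [nextCoeff_X_add_C]

lemma coeff_zero_aux (g : ℕ → ℝ) (m : ℕ) :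
    (∏ j ∈ range m, (X + C (g j))).coeff 0 = ∏ j ∈ range m, g j := by
  simp [Polynomial.coeff_zero_eq_eval_zero, Polynomial.eval_prod]

lemma coeff_one_aux (g : ℕ → ℝ) (hg : ∀ j, g j ≠ 0) (m : ℕ) :
    (∏ j ∈ range m, (X + C (g j))).coeff 1 =
      (∏ j ∈ range m, g j) * ∑ j ∈ range m, (g j)⁻¹ := by
  induction m with
  | zero => simp [Polynomial.coeff_one]
  | succ n ih =>
    rw [prod_range_succ, prod_range_succ, sum_range_succ]
    have h : ((∏ j ∈ range n, ((X : ℝ[X]) + C (g j))) * (X + C (g n))).coeff 1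
        = (∏ j ∈ range n, ((X : ℝ[X]) + C (g j))).coeff 0
          + g n * (∏ j ∈ range n, ((X : ℝ[X]) + C (g j))).coeff 1 := by
      rw [mul_add, coeff_add, coeff_mul_X, coeff_mul_C]; ring
    rw [h, ih, coeff_zero_aux]
    have hn := hg n
    field_simp
    ring

lemma coeff_sq_one (p : ℝ[X]) : (p ^ 2).coeff 1 = 2 * (p.coeff 0 * p.coeff 1) := by
  rw [sq, Polynomial.coeff_mul, Finset.Nat.sum_antidiagonal_eq_sum_range_succ_mk]
  simp [Finset.sum_range_succ]
  ring

lemma coeff_sq_zero (p : ℝ[X]) : (p ^ 2).coeff 0 = (p.coeff 0) ^ 2 := by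
  simp [Polynomial.coeff_zero_eq_eval_zero]

lemma fact_aux (t m : ℕ) :
    (t.factorial : ℝ) * ∏ j ∈ range m, ((t : ℝ) + j + 1) = ((t + m).factorial : ℝ) := by
  induction m with
  | zero => simp
  | succ n ih =>
    rw [prod_range_succ, ← mul_assoc, ih]
    have h : t + (n + 1) = (t + n) + 1 := rfl
    rw [h, Nat.factorial_succ]
    push_cast
    ring

end Stmt7Aux

/-- `Q_{t,m}` is divisible by `x`, and `Q_{t,m}(x)/x` is an even
polynomial of degree `2(m−1)` whose constant coefficient equals
`4·[(t+m)!/t!]²·(H_{t+m} − H_t)`. -/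
theorem stmt7 (t m : ℕ) (hm : 1 ≤ m) :
    X ∣ Qpoly t m ∧
    ((Qpoly t m) /ₘ X).comp (-X) = (Qpoly t m) /ₘ X ∧
    ((Qpoly t m) /ₘ X).natDegree = 2 * (m - 1) ∧
    ((Qpoly t m) /ₘ X).coeff 0 =
      4 * (((t + m).factorial : ℝ) / (t.factorial : ℝ)) ^ 2 * (Hnum (t + m) - Hnum t) := by
  classical
  set c : ℕ → ℝ := fun j => (t : ℝ) + j + 1 with hc
  have hcpos : ∀ j, 0 < c j := fun j => by positivity
  have hcne : ∀ j, c j ≠ 0 := fun j => (hcpos j).ne'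
  set P : ℝ[X] := ∏ j ∈ Finset.range m, (X + C (c j)) with hPdef
  set S : ℝ[X] := ∏ j ∈ Finset.range m, (X + C (-c j)) with hSdef
  have hPP : Ppoly t m = P := rfl
  have hu : ((-1 : ℝ) ^ m) * ((-1 : ℝ) ^ m) = 1 := by
    rw [← sq, ← pow_mul, mul_comm, pow_mul, neg_one_sq, one_pow]
  -- P(-x) = (-1)^m * S
  have hcomp : (Ppoly t m).comp (-X) = (-1) ^ m * S := by
    rw [Ppoly, Polynomial.prod_comp]
    have h1 : ∀ j ∈ Finset.range m, ((X : ℝ[X]) + C ((t : ℝ) + j + 1)).comp (-X)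
        = (-1) * (X + C (-c j)) := by
      intro j _
      simp [hc]
      ring
    rw [Finset.prod_congr rfl h1, Finset.prod_mul_distrib, Finset.prod_const,
      Finset.card_range, hSdef]
  have hQ : Qpoly t m = P ^ 2 - S ^ 2 := by
    rw [Qpoly, hcomp, mul_pow, hPP, ← pow_mul, mul_comm m 2, pow_mul, neg_one_sq, one_pow,
      one_mul]
  -- basic coefficient data
  set p0 : ℝ := ∏ j ∈ Finset.range m, c j with hp0def
  set σ : ℝ := ∑ j ∈ Finset.range m, (c j)⁻¹ with hσdef
  have hP0 : P.coeff 0 = p0 := Stmt7Aux.coeff_zero_aux c m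
  have hS0 : S.coeff 0 = (-1) ^ m * p0 := by
    rw [hSdef, Stmt7Aux.coeff_zero_aux]
    have h1 : ∀ j ∈ Finset.range m, -c j = (-1) * c j := fun j _ => by ring
    rw [Finset.prod_congr rfl h1, Finset.prod_mul_distrib, Finset.prod_const,
      Finset.card_range, hp0def]
  have hP1 : P.coeff 1 = p0 * σ := Stmt7Aux.coeff_one_aux c hcne m
  have hS1 : S.coeff 1 = ((-1) ^ m * p0) * (-σ) := by
    have h2 := Stmt7Aux.coeff_one_aux (fun j => -c j) (fun j => neg_ne_zero.mpr (hcne j)) m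
    rw [hSdef]
    rw [h2]
    have h1 : ∀ j ∈ Finset.range m, -c j = (-1) * c j := fun j _ => by ring
    rw [Finset.prod_congr rfl h1, Finset.prod_mul_distrib, Finset.prod_const,
      Finset.card_range]
    have h3 : ∑ j ∈ Finset.range m, (-c j)⁻¹ = -σ := by
      rw [hσdef, ← Finset.sum_neg_distrib]
      exact Finset.sum_congr rfl fun j _ => by rw [inv_neg]
    rw [h3, hp0def]
  -- coefficient 0 and 1 of Q
  have hQ0 : (Qpoly t m).coeff 0 = 0 := by
    rw [hQ, Polynomial.coeff_sub, Stmt7Aux.coeff_sq_zero, Stmt7Aux.coeff_sq_zero, hP0, hS0]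
    linear_combination (-(p0 ^ 2)) * hu
  have hQ1 : (Qpoly t m).coeff 1 = 4 * p0 ^ 2 * σ := by
    rw [hQ, Polynomial.coeff_sub, Stmt7Aux.coeff_sq_one, Stmt7Aux.coeff_sq_one, hP0, hS0,
      hP1, hS1]
    linear_combination (2 * p0 ^ 2 * σ) * hu
  -- divisibility and factorization
  have hX : (X : ℝ[X]).Monic := monic_X
  have hdvd : (X : ℝ[X]) ∣ Qpoly t m := Polynomial.X_dvd_iff.mpr hQ0
  have hfac : Qpoly t m = X * (Qpoly t m /ₘ X) := by
    conv_lhs => rw [← Polynomial.modByMonic_add_div (Qpoly t m) X]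
    rw [(Polynomial.modByMonic_eq_zero_iff_dvd hX).mpr hdvd, zero_add]
  -- oddness of Q
  have hodd : (Qpoly t m).comp (-X) = -(Qpoly t m) := by
    have h2 : ((-X : ℝ[X]).comp (-X)) = X := by simp
    rw [Qpoly, Polynomial.sub_comp, Polynomial.pow_comp, Polynomial.pow_comp,
      Polynomial.comp_assoc, h2, Polynomial.comp_X]
    ring
  -- evenness of R
  have heven : ((Qpoly t m) /ₘ X).comp (-X) = (Qpoly t m) /ₘ X := by
    have h4 : -(X * (((Qpoly t m) /ₘ X).comp (-X))) = -(X * ((Qpoly t m) /ₘ X)) := by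
      have h5 : (X * ((Qpoly t m) /ₘ X)).comp (-X)
          = -(X * (((Qpoly t m) /ₘ X).comp (-X))) := by
        rw [Polynomial.mul_comp, Polynomial.X_comp, neg_mul]
      rw [← h5, ← hfac, hodd]
    exact mul_left_cancel₀ Polynomial.X_ne_zero (neg_injective h4)
  -- degrees
  have hPm : P.Monic := Stmt7Aux.monic_aux c m
  have hSm : S.Monic := Stmt7Aux.monic_aux _ m
  have hPdeg : P.natDegree = m := Stmt7Aux.natDegree_aux c m
  have hSdeg : S.natDegree = m := Stmt7Aux.natDegree_aux _ m
  have hP2deg : (P ^ 2).natDegree = 2 * m := by rw [Polynomial.natDegree_pow, hPdeg]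
  have hS2deg : (S ^ 2).natDegree = 2 * m := by rw [Polynomial.natDegree_pow, hSdeg]
  have hQle : (Qpoly t m).natDegree ≤ 2 * m := by
    rw [hQ]
    refine le_trans (Polynomial.natDegree_sub_le _ _) ?_
    rw [hP2deg, hS2deg, max_self]
  have hc2m : (Qpoly t m).coeff (2 * m) = 0 := by
    rw [hQ, Polynomial.coeff_sub]
    have e1 := (hPm.pow 2).coeff_natDegree
    rw [hP2deg] at e1
    have e2 := (hSm.pow 2).coeff_natDegree
    rw [hS2deg] at e2
    rw [e1, e2, sub_self]
  set a : ℝ := ∑ j ∈ Finset.range m, c j with hadef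
  have hapos : 0 < a :=
    Finset.sum_pos (fun j _ => hcpos j) (Finset.nonempty_range_iff.mpr (by omega))
  have hnP : (P ^ 2).coeff (2 * m - 1) = 2 * a := by
    have h7 := Polynomial.nextCoeff_of_natDegree_pos (p := P ^ 2) (by omega)
    rw [hP2deg] at h7
    rw [← h7, Polynomial.Monic.nextCoeff_pow hPm, hPdef, Stmt7Aux.nextCoeff_aux, ← hadef,
      nsmul_eq_mul]
    norm_num
  have hnS : (S ^ 2).coeff (2 * m - 1) = -(2 * a) := by
    have h7 := Polynomial.nextCoeff_of_natDegree_pos (p := S ^ 2) (by omega)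
    rw [hS2deg] at h7
    rw [← h7, Polynomial.Monic.nextCoeff_pow hSm, hSdef, Stmt7Aux.nextCoeff_aux]
    have hsum : ∑ j ∈ Finset.range m, -c j = -a := by
      rw [hadef]; simp
    rw [hsum, nsmul_eq_mul]
    push_cast
    ring
  have hc2m1 : (Qpoly t m).coeff (2 * m - 1) = 4 * a := by
    rw [hQ, Polynomial.coeff_sub, hnP, hnS]
    ring
  have hQdeg : (Qpoly t m).natDegree = 2 * m - 1 := by
    refine le_antisymm ?_ ?_
    · rw [Polynomial.natDegree_le_iff_coeff_eq_zero]
      intro N hN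
      rcases eq_or_lt_of_le (Nat.succ_le_of_lt hN) with h | h
      · have : N = 2 * m := by omega
        rw [this, hc2m]
      · exact Polynomial.coeff_eq_zero_of_natDegree_lt (by omega)
    · exact Polynomial.le_natDegree_of_ne_zero (by rw [hc2m1]; exact mul_ne_zero (by norm_num) hapos.ne')
  have hRdeg : ((Qpoly t m) /ₘ X).natDegree = 2 * (m - 1) := by
    rw [Polynomial.natDegree_divByMonic _ hX, hQdeg, Polynomial.natDegree_X]
    omega
  -- constant coefficient of R
  have hR0 : ((Qpoly t m) /ₘ X).coeff 0 = (Qpoly t m).coeff 1 := by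
    conv_rhs => rw [hfac]
    simpa using (Polynomial.coeff_X_mul ((Qpoly t m) /ₘ X) 0).symm
  have htne : (t.factorial : ℝ) ≠ 0 := Nat.cast_ne_zero.mpr t.factorial_ne_zero
  have hp0 : p0 = ((t + m).factorial : ℝ) / (t.factorial : ℝ) := by
    rw [eq_div_iff htne]
    have := Stmt7Aux.fact_aux t m
    rw [hp0def]
    linarith [this]
  have hσval : σ = Hnum (t + m) - Hnum t := by
    rw [Hnum, Hnum, eq_sub_iff_add_eq, hσdef,
      Finset.sum_range_add (fun i : ℕ => (1 : ℝ) / (i + 1)) t m, add_comm]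
    congr 1
    refine Finset.sum_congr rfl fun j _ => ?_
    simp only [hc, one_div]
    push_cast
    ring_nf
  refine ⟨hdvd, heven, hRdeg, ?_⟩
  rw [hR0, hQ1, hp0, hσval]
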